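/- In A_C(m,n), every closed walk from v_{1,0} has even cost, and for any closed walk collecting rewards (each vertex's reward counted once), there is a closed walk of no greater cost and equal or greater reward that visits each row at most as a single back-and-forth excursion: it visits rows in increasing order of index and, in each visited row i, goes from v_{i,0} to some v_{i,j_i} and back. -/

import Mathlib

/-- Adjacency in the single-column aisle-graph `A_C(m,n)`: vertices `(i,j)` with
`1 ≤ i ≤ m`, `0 ≤ j ≤ n`; row edges within a row, column edges only in column `0`. -/
def adjC (m n : ℕ) (p q : ℕ × ℕ) : Prop :=
  (p.1 = q.1 ∧ 1 ≤ p.1 ∧ p.1 ≤ m ∧ (p.2 + 1 = q.2 ∨ q.2 + 1 = p.2) ∧ p.2 ≤ n ∧ q.2 ≤ n) ∨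
  (p.2 = 0 ∧ q.2 = 0 ∧ (p.1 + 1 = q.1 ∨ q.1 + 1 = p.1) ∧
    1 ≤ p.1 ∧ p.1 ≤ m ∧ 1 ≤ q.1 ∧ q.1 ≤ m)

/-- A tour: a closed walk starting and ending at `v_{1,0}`. -/
def IsTourC (m n : ℕ) (w : List (ℕ × ℕ)) : Prop :=
  w.Chain' (adjC m n) ∧ w.head? = some (1, 0) ∧ w.getLast? = some (1, 0)

/-- The cost of a walk is its number of edges. -/
def cost (w : List (ℕ × ℕ)) : ℕ := w.length - 1

/-- The back-and-forth excursion in row `i` down to depth `d`: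
`(i,0), (i,1), …, (i,d), (i,d-1), …, (i,0)`. -/
def excursion (i d : ℕ) : List (ℕ × ℕ) :=
  ((List.range (d + 1)).map (fun j => (i, j))) ++
    (((List.range (d + 1)).map (fun j => (i, j))).reverse.tail)

/-- The canonical walk that visits rows `1, …, k` in increasing order, performing
in row `i` a back-and-forth excursion to depth `d i`, then returns to `v_{1,0}`
along column `0`. -/
def excWalk (k : ℕ) (d : ℕ → ℕ) : List (ℕ × ℕ) :=
  ((List.range k).flatMap (fun t => excursion (t + 1) (d (t + 1)))) ++
    ((List.range (k - 1)).reverse.map (fun t => (t + 1, 0)))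

/-- cut indicator -/
def cutf (c v : ℕ × ℕ) : Bool :=
  if c.2 = 0 then decide (c.1 ≤ v.1) else decide (v.1 = c.1 ∧ c.2 ≤ v.2)

/-- crossing count of a cut along a walk -/
def cr (f : ℕ × ℕ → Bool) : List (ℕ × ℕ) → ℕ
  | a :: b :: l => (if f a = f b then 0 else 1) + cr f (b :: l)
  | _ => 0

lemma cr_nil (f) : cr f [] = 0 := rfl
lemma cr_single (f a) : cr f [a] = 0 := rfl
lemma cr_cons (f a b l) : cr f (a :: b :: l) = (if f a = f b then 0 else 1) + cr f (b :: l) := rfl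

lemma cr_even (f : ℕ × ℕ → Bool) :
    ∀ (l : List (ℕ × ℕ)) (a b : ℕ × ℕ), (a :: l).getLast? = some b →
      (Even (cr f (a :: l)) ↔ f a = f b) := by
  intro l
  induction l with
  | nil => intro a b h; simp at h; subst h; simp [cr_single]
  | cons c l' ih =>
      intro a b h
      rw [List.getLast?_cons_cons] at h
      have h2 := ih c b h
      rw [cr_cons, Nat.even_add]
      rcases Bool.eq_false_or_eq_true (f a) with ha | ha <;>
        rcases Bool.eq_false_or_eq_true (f c) with hc | hc <;>
        rcases Bool.eq_false_or_eq_true (f b) with hb | hb <;>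
          simp [ha, hc, hb, Nat.even_iff, Nat.odd_iff] at h2 ⊢ <;> omega

lemma cr_zero_all (f : ℕ × ℕ → Bool) :
    ∀ (l : List (ℕ × ℕ)) (a : ℕ × ℕ), cr f (a :: l) = 0 → ∀ x ∈ a :: l, f x = f a := by
  intro l
  induction l with
  | nil => intro a _ x hx; simp at hx; subst hx; rfl
  | cons c l' ih =>
      intro a h x hx
      rw [cr_cons] at h
      have h1 : f a = f c := by by_contra hne; simp [hne] at h
      have h2 : cr f (c :: l') = 0 := by omega
      rcases List.mem_cons.1 hx with rfl | hx
      · rfl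
      · rw [ih c h2 x hx, h1]

lemma cr_ge_two (f : ℕ × ℕ → Bool) (l : List (ℕ × ℕ)) (a : ℕ × ℕ)
    (hlast : (a :: l).getLast? = some a) (x : ℕ × ℕ) (hx : x ∈ a :: l)
    (hfx : f x ≠ f a) : 2 ≤ cr f (a :: l) := by
  have hev : Even (cr f (a :: l)) := (cr_even f l a a hlast).2 rfl
  have hne : cr f (a :: l) ≠ 0 := fun h => hfx (cr_zero_all f l a h x hx)
  obtain ⟨t, ht⟩ := hev; omega

/-- the finite set of all cuts of `A_C(m,n)` -/
def cutSet (m n : ℕ) : Finset (ℕ × ℕ) :=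
  ((Finset.range (m + 1)) ×ˢ (Finset.range (n + 1))).filter
    (fun c => (c.2 = 0 ∧ 2 ≤ c.1) ∨ (1 ≤ c.2 ∧ 1 ≤ c.1))

lemma mem_cutSet {m n : ℕ} {c : ℕ × ℕ} :
    c ∈ cutSet m n ↔ c.1 ≤ m ∧ c.2 ≤ n ∧ ((c.2 = 0 ∧ 2 ≤ c.1) ∨ (1 ≤ c.2 ∧ 1 ≤ c.1)) := by
  simp [cutSet, Finset.mem_filter, Finset.mem_product, Nat.lt_succ_iff]
  tauto

/-- each edge of the graph crosses exactly one cut -/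
lemma crossing_unique {m n : ℕ} {p q : ℕ × ℕ} (h : adjC m n p q) :
    ∃! c, c ∈ cutSet m n ∧ cutf c p ≠ cutf c q := by
  rcases h with ⟨h1, h2, h3, h4 | h4, h5, h6⟩ | ⟨h1, h2, h3 | h3, h4, h5, h6, h7⟩
  · refine ⟨(p.1, q.2), ⟨mem_cutSet.2 ⟨by omega, by omega, by omega⟩, ?_⟩, ?_⟩
    · have hq : ¬ q.2 = 0 := by omega
      simp only [cutf, hq, if_false, ne_eq, decide_eq_decide, true_and, and_true, le_refl, iff_true, true_iff] <;> omega
    · rintro ⟨i, j⟩ ⟨hc, hne⟩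
      rw [mem_cutSet] at hc
      simp only [Prod.mk.injEq]
      rcases Nat.eq_zero_or_pos j with hj | hj
      · exfalso
        simp only [cutf, hj, eq_self_iff_true, if_true, ne_eq, decide_eq_decide, true_and, and_true, le_refl, iff_true, true_iff] at hne <;> omega
      · have hj0 : ¬ j = 0 := by omega
        simp only [cutf, hj0, if_false, ne_eq, decide_eq_decide, true_and, and_true, le_refl, iff_true, true_iff] at hne <;> omega
  · refine ⟨(p.1, p.2), ⟨mem_cutSet.2 ⟨by omega, by omega, by omega⟩, ?_⟩, ?_⟩
    · have hp : ¬ p.2 = 0 := by omega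
      simp only [cutf, hp, if_false, ne_eq, decide_eq_decide, true_and, and_true, le_refl, iff_true, true_iff] <;> omega
    · rintro ⟨i, j⟩ ⟨hc, hne⟩
      rw [mem_cutSet] at hc
      simp only [Prod.mk.injEq]
      rcases Nat.eq_zero_or_pos j with hj | hj
      · exfalso
        simp only [cutf, hj, eq_self_iff_true, if_true, ne_eq, decide_eq_decide, true_and, and_true, le_refl, iff_true, true_iff] at hne <;> omega
      · have hj0 : ¬ j = 0 := by omega
        simp only [cutf, hj0, if_false, ne_eq, decide_eq_decide, true_and, and_true, le_refl, iff_true, true_iff] at hne <;> omega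
  · refine ⟨(q.1, 0), ⟨mem_cutSet.2 ⟨by omega, by omega, by omega⟩, ?_⟩, ?_⟩
    · simp only [cutf, eq_self_iff_true, if_true, ne_eq, decide_eq_decide, true_and, and_true, le_refl, iff_true, true_iff] <;> omega
    · rintro ⟨i, j⟩ ⟨hc, hne⟩
      rw [mem_cutSet] at hc
      simp only [Prod.mk.injEq]
      rcases Nat.eq_zero_or_pos j with hj | hj
      · simp only [cutf, hj, eq_self_iff_true, if_true, ne_eq, decide_eq_decide, true_and, and_true, le_refl, iff_true, true_iff] at hne <;> omega
      · exfalso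
        have hj0 : ¬ j = 0 := by omega
        simp only [cutf, hj0, if_false, ne_eq, decide_eq_decide, h1, h2, true_and, and_true, le_refl, iff_true, true_iff] at hne <;> omega
  · refine ⟨(p.1, 0), ⟨mem_cutSet.2 ⟨by omega, by omega, by omega⟩, ?_⟩, ?_⟩
    · simp only [cutf, eq_self_iff_true, if_true, ne_eq, decide_eq_decide, true_and, and_true, le_refl, iff_true, true_iff] <;> omega
    · rintro ⟨i, j⟩ ⟨hc, hne⟩
      rw [mem_cutSet] at hc
      simp only [Prod.mk.injEq]
      rcases Nat.eq_zero_or_pos j with hj | hj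
      · simp only [cutf, hj, eq_self_iff_true, if_true, ne_eq, decide_eq_decide, true_and, and_true, le_refl, iff_true, true_iff] at hne <;> omega
      · exfalso
        have hj0 : ¬ j = 0 := by omega
        simp only [cutf, hj0, if_false, ne_eq, decide_eq_decide, h1, h2, true_and, and_true, le_refl, iff_true, true_iff] at hne <;> omega

lemma filter_eq_singleton {α : Type*} [DecidableEq α] {s : Finset α} {p : α → Prop}
    [DecidablePred p] {c : α} (h : c ∈ s ∧ p c) (hu : ∀ y, y ∈ s ∧ p y → y = c) :
    s.filter p = {c} := by
  ext y
  simp only [Finset.mem_filter, Finset.mem_singleton]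
  constructor
  · exact fun hy => hu y hy
  · rintro rfl; exact h

/-- summing crossing numbers over all cuts gives the number of edges of the walk -/
lemma sum_cr_eq {m n : ℕ} :
    ∀ w : List (ℕ × ℕ), List.Chain' (adjC m n) w → w ≠ [] →
      ∑ c ∈ cutSet m n, cr (cutf c) w = w.length - 1 := by
  intro w
  induction w with
  | nil => intro _ h; exact absurd rfl h
  | cons a l ih =>
      intro hch _
      match l, hch with
      | [], _ => simp [cr_single]
      | b :: l', hch =>
          have hadj : adjC m n a b := List.isChain_cons.1 hch |>.1 b rfl
          have hch' : List.Chain' (adjC m n) (b :: l') := (List.isChain_cons_cons.1 hch).2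
          simp only [cr_cons, Finset.sum_add_distrib]
          rw [ih hch' (by simp)]
          obtain ⟨c₀, hc₀, hu⟩ := crossing_unique hadj
          have : (∑ c ∈ cutSet m n, if cutf c a = cutf c b then 0 else 1) = 1 := by
            have h1 : (∑ c ∈ cutSet m n, if cutf c a = cutf c b then 0 else 1)
                = ∑ c ∈ cutSet m n, if ¬ (cutf c a = cutf c b) then 1 else 0 := by
              apply Finset.sum_congr rfl; intro c _
              by_cases h : cutf c a = cutf c b <;> simp [h]
            rw [h1, Finset.sum_boole,
              filter_eq_singleton (c := c₀) hc₀ (fun y hy => hu y hy)]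
            simp
          rw [this]
          simp [List.length_cons]
          omega

lemma adjC_symm {m n : ℕ} {p q : ℕ × ℕ} (h : adjC m n p q) : adjC m n q p := by
  unfold adjC at *; omega

lemma excursion_ne_nil (i d : ℕ) : excursion i d ≠ [] := by
  simp [excursion, List.range_succ_eq_map]

lemma excursion_head (i d : ℕ) : (excursion i d).head? = some (i, 0) := by
  simp [excursion, List.range_succ_eq_map]

lemma excursion_getLast (i d : ℕ) : (excursion i d).getLast? = some (i, 0) := by
  unfold excursion
  cases d with
  | zero => simp [List.range_succ_eq_map]
  | succ e =>
      rw [List.getLast?_append_of_ne_nil]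
      · rw [List.tail_reverse, List.getLast?_reverse]
        have : (List.map (fun j => (i, j)) (List.range (e + 2))).dropLast
            = List.map (fun j => (i, j)) (List.range (e + 1)) := by
          rw [List.range_succ (n := e + 1), List.map_append]
          simp only [List.map_cons, List.map_nil]
          rw [List.dropLast_concat]
        rw [this]
        simp [List.range_succ_eq_map]
      · have : (List.map (fun j => (i, j)) (List.range (e + 2))).length = e + 2 := by simp
        intro hcon
        rw [List.tail_reverse] at hcon
        have := congrArg List.length hcon
        simp at this
lemma excursion_length (i d : ℕ) : (excursion i d).length = 2 * d + 1 := by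
  simp [excursion]; omega


lemma map_range_getLast (i : ℕ) {d : ℕ} :
    ((List.range (d + 1)).map (fun j => (i, j))).getLast? = some (i, d) := by
  rw [List.range_succ, List.map_append]
  exact List.getLast?_concat

lemma excursion_chain {m n i d : ℕ} (hi1 : 1 ≤ i) (hi2 : i ≤ m) (hd : d ≤ n) :
    List.Chain' (adjC m n) (excursion i d) := by
  have hLgen : ∀ e, e ≤ n → List.Chain' (adjC m n) ((List.range (e + 1)).map (fun j => (i, j))) := by
    intro e he
    unfold List.Chain'
    rw [List.isChain_map, List.isChain_range_succ]
    intro j hj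
    exact Or.inl ⟨rfl, hi1, hi2, Or.inl rfl, by omega, by omega⟩
  have hL := hLgen d hd
  unfold List.Chain' at hL ⊢
  rw [excursion, List.isChain_append]
  refine ⟨hL, List.IsChain.tail (List.isChain_reverse.2 (hL.imp (fun a b h => adjC_symm h))), ?_⟩
  intro x hx y hy
  rw [map_range_getLast] at hx
  cases hx
  cases d with
  | zero => simp [List.range_succ_eq_map] at hy
  | succ e =>
      rw [List.tail_reverse, List.range_succ (n := e + 1), List.map_append] at hy
      simp only [List.map_cons, List.map_nil] at hy
      rw [List.dropLast_concat, List.head?_reverse, map_range_getLast] at hy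
      cases hy
      exact Or.inl ⟨rfl, hi1, hi2, Or.inr rfl, by omega, by omega⟩

lemma mem_excursion {i d j : ℕ} (hj : j ≤ d) : (i, j) ∈ excursion i d := by
  apply List.mem_append_left
  simp only [List.mem_map, List.mem_range]
  exact ⟨j, by omega, rfl⟩

/-- the forward part of the excursion walk -/
lemma excF {m n : ℕ} (d : ℕ → ℕ) (hd : ∀ i, d i ≤ n) :
    ∀ k, 1 ≤ k → k ≤ m →
      List.Chain' (adjC m n) ((List.range k).flatMap (fun t => excursion (t + 1) (d (t + 1)))) ∧
      ((List.range k).flatMap (fun t => excursion (t + 1) (d (t + 1)))).head? = some (1, 0) ∧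
      ((List.range k).flatMap (fun t => excursion (t + 1) (d (t + 1)))).getLast? = some (k, 0) := by
  intro k
  induction k with
  | zero => omega
  | succ e ih =>
      intro _ hkm
      rcases Nat.eq_zero_or_pos e with he | he
      · subst he
        have : List.range 1 = [0] := by simp [List.range_succ]
        simp only [this, List.flatMap_cons, List.flatMap_nil, List.append_nil]
        exact ⟨excursion_chain (by omega) (by omega) (hd 1),
          excursion_head 1 (d 1), excursion_getLast 1 (d 1)⟩
      · obtain ⟨ch, hh, hl⟩ := ih he (by omega)
        rw [List.range_succ, List.flatMap_append, List.flatMap_cons, List.flatMap_nil,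
          List.append_nil]
        refine ⟨List.isChain_append.2 ⟨ch, excursion_chain (by omega) (by omega) (hd (e + 1)), ?_⟩,
          ?_, ?_⟩
        · intro x hx y hy
          rw [hl] at hx; cases hx
          rw [excursion_head] at hy; cases hy
          exact Or.inr ⟨rfl, rfl, Or.inl rfl, by omega, by omega, by omega, by omega⟩
        · rw [List.head?_append_of_ne_nil _ (by intro hcon; rw [hcon] at hh; simp at hh)]
          exact hh
        · rw [List.getLast?_append_of_ne_nil _ (excursion_ne_nil _ _)]
          exact excursion_getLast _ _

lemma excWalk_tour {m n k : ℕ} (d : ℕ → ℕ) (hk1 : 1 ≤ k) (hkm : k ≤ m) (hd : ∀ i, d i ≤ n) :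
    IsTourC m n (excWalk k d) := by
  obtain ⟨ch, hh, hl⟩ := excF d hd k hk1 hkm
  set F := (List.range k).flatMap (fun t => excursion (t + 1) (d (t + 1))) with hF
  have hFne : F ≠ [] := by intro hcon; rw [hcon] at hh; simp at hh
  rcases Nat.eq_zero_or_pos (k - 1) with hk | hk
  · -- k = 1 : return path empty
    have hk1' : k = 1 := by omega
    subst hk1'
    refine ⟨?_, ?_, ?_⟩ <;> simp only [excWalk, Nat.sub_self, List.range_zero,
      List.reverse_nil, List.map_nil, List.append_nil]
    · exact ch
    · exact hh
    · exact hl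
  · -- k ≥ 2
    have hRch : List.Chain' (adjC m n) ((List.range (k - 1)).reverse.map (fun t => (t + 1, 0))) := by
      unfold List.Chain'
      rw [List.isChain_map, List.isChain_reverse]
      have : k - 1 = (k - 2) + 1 := by omega
      rw [this, List.isChain_range_succ]
      intro t ht
      exact Or.inr ⟨rfl, rfl, Or.inr rfl, by omega, by omega, by omega, by omega⟩
    have hRne : ((List.range (k - 1)).reverse.map (fun t => (t + 1, 0))) ≠ [] := by
      simp; omega
    have hRhead : ((List.range (k - 1)).reverse.map (fun t => (t + 1, 0))).head? = some (k - 1, 0) := by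
      rw [List.head?_map, List.head?_reverse]
      have : k - 1 = (k - 2) + 1 := by omega
      rw [this, List.range_succ, List.getLast?_concat]
      have h2 : k - 2 + 1 = k - 1 := by omega
      rw [Option.map_some, h2]
    have hRlast : ((List.range (k - 1)).reverse.map (fun t => (t + 1, 0))).getLast? = some (1, 0) := by
      rw [List.getLast?_map, List.getLast?_reverse]
      have : k - 1 = (k - 2) + 1 := by omega
      rw [this, List.range_succ_eq_map]
      simp
    refine ⟨?_, ?_, ?_⟩
    · rw [excWalk, ← hF]; unfold List.Chain'; rw [List.isChain_append]
      refine ⟨ch, hRch, ?_⟩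
      intro x hx y hy
      rw [hl] at hx; cases hx
      rw [hRhead] at hy; cases hy
      exact Or.inr ⟨rfl, rfl, Or.inr (by omega), by omega, by omega, by omega, by omega⟩
    · rw [excWalk, ← hF, List.head?_append_of_ne_nil _ hFne]; exact hh
    · rw [excWalk, ← hF, List.getLast?_append_of_ne_nil _ hRne]; exact hRlast

lemma list_sum_range (f : ℕ → ℕ) : ∀ k, ((List.range k).map f).sum = ∑ t ∈ Finset.range k, f t := by
  intro k
  induction k with
  | zero => simp
  | succ e ih => rw [List.range_succ, List.map_append, List.sum_append, Finset.sum_range_succ, ih]; simp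

lemma excWalk_length {k : ℕ} (d : ℕ → ℕ) (hk : 1 ≤ k) :
    (excWalk k d).length = 2 * (∑ t ∈ Finset.range k, d (t + 1)) + 2 * k - 1 := by
  rw [excWalk, List.length_append, List.length_flatMap, List.length_map, List.length_reverse,
    List.length_range]
  have h1 : (List.map (List.length ∘ fun t => excursion (t + 1) (d (t + 1))) (List.range k)).sum
      = ∑ t ∈ Finset.range k, (2 * d (t + 1) + 1) := by
    rw [← list_sum_range]
    congr 1
    apply List.map_congr_left
    intro t _
    exact excursion_length _ _
  simp only [Function.comp_def] at h1
  rw [h1, Finset.sum_add_distrib, ← Finset.mul_sum]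
  simp only [Finset.sum_const, Finset.card_range, smul_eq_mul, mul_one]
  omega

lemma mem_excWalk {k i j : ℕ} (d : ℕ → ℕ) (hi1 : 1 ≤ i) (hik : i ≤ k) (hj : j ≤ d i) :
    (i, j) ∈ excWalk k d := by
  apply List.mem_append_left
  rw [List.mem_flatMap]
  refine ⟨i - 1, by rw [List.mem_range]; omega, ?_⟩
  have : i - 1 + 1 = i := by omega
  rw [this]
  exact mem_excursion hj

lemma adjC_bounds {m n : ℕ} {p q : ℕ × ℕ} (h : adjC m n p q) :
    (1 ≤ p.1 ∧ p.1 ≤ m ∧ p.2 ≤ n) ∧ (1 ≤ q.1 ∧ q.1 ≤ m ∧ q.2 ≤ n) := by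
  unfold adjC at h; omega

lemma chain_bounds {m n : ℕ} :
    ∀ w : List (ℕ × ℕ), List.Chain' (adjC m n) w →
      ∀ v ∈ w, (1 ≤ v.1 ∧ v.1 ≤ m ∧ v.2 ≤ n) ∨ w.length ≤ 1 := by
  intro w
  induction w with
  | nil => intro _ v hv; simp at hv
  | cons a l ih =>
      intro hch v hv
      match l, hch, hv with
      | [], _, hv => right; simp
      | b :: l', hch, hv =>
          have hadj : adjC m n a b := (List.isChain_cons_cons.1 hch).1
          have hch' := (List.isChain_cons_cons.1 hch).2
          left
          rcases List.mem_cons.1 hv with rfl | hv'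
          · exact (adjC_bounds hadj).1
          · rcases ih hch' v hv' with h | h
            · exact h
            · have : l' = [] := by
                cases l' with | nil => rfl | cons _ _ => simp at h
              subst this
              have : v = b := by simpa using hv'
              subst this
              exact (adjC_bounds hadj).2

lemma cutf_base {m n : ℕ} {c : ℕ × ℕ} (hc : c ∈ cutSet m n) : cutf c (1, 0) = false := by
  rw [mem_cutSet] at hc
  obtain ⟨c1, c2⟩ := c
  rcases Nat.eq_zero_or_pos c2 with h | h
  · subst h
    simp only [cutf, if_pos rfl, decide_eq_false_iff_not]
    simp at hc ⊢
    omega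
  · have h0 : ¬ c2 = 0 := by omega
    simp only [cutf, h0, if_false, decide_eq_false_iff_not]
    simp
    omega

lemma cr_active {m n : ℕ} {w : List (ℕ × ℕ)} (hw : IsTourC m n w) {c : ℕ × ℕ}
    (hc : c ∈ cutSet m n) (x : ℕ × ℕ) (hx : x ∈ w) (hfx : cutf c x = true) :
    2 ≤ cr (cutf c) w := by
  obtain ⟨hch, hh, hl⟩ := hw
  match w, hh with
  | a :: l, hh =>
      have ha : a = (1, 0) := by simpa using hh
      subst ha
      apply cr_ge_two (cutf c) l (1, 0) hl x hx
      rw [hfx, cutf_base hc]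
      simp

lemma tour_cost_lb {m n k : ℕ} (d : ℕ → ℕ) (w : List (ℕ × ℕ)) (hw : IsTourC m n w)
    (hk1 : 1 ≤ k) (hkm : k ≤ m) (hd : ∀ i, d i ≤ n)
    (hwit1 : ∀ t, t < k - 1 → ∃ x ∈ w, cutf (t + 2, 0) x = true)
    (hwit2 : ∀ t, t < k → ∀ j, j < d (t + 1) → ∃ x ∈ w, cutf (t + 1, j + 1) x = true) :
    2 * (k - 1) + 2 * (∑ t ∈ Finset.range k, d (t + 1)) ≤ w.length - 1 := by
  classical
  set S1 : Finset (ℕ × ℕ) := (Finset.range (k - 1)).image (fun t => (t + 2, 0)) with hS1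
  set S2 : Finset (ℕ × ℕ) :=
    (Finset.range k).biUnion (fun t => (Finset.range (d (t + 1))).image (fun j => (t + 1, j + 1)))
    with hS2
  have hS1sub : S1 ⊆ cutSet m n := by
    intro c hc
    rw [hS1, Finset.mem_image] at hc
    obtain ⟨t, ht, rfl⟩ := hc
    rw [Finset.mem_range] at ht
    exact mem_cutSet.2 ⟨by omega, by omega, by omega⟩
  have hS2sub : S2 ⊆ cutSet m n := by
    intro c hc
    rw [hS2, Finset.mem_biUnion] at hc
    obtain ⟨t, ht, hc⟩ := hc
    rw [Finset.mem_image] at hc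
    obtain ⟨j, hj, rfl⟩ := hc
    rw [Finset.mem_range] at ht hj
    have := hd (t + 1)
    exact mem_cutSet.2 ⟨by omega, by omega, by omega⟩
  have hdisj : Disjoint S1 S2 := by
    rw [Finset.disjoint_left]
    intro c hc1 hc2
    rw [hS1, Finset.mem_image] at hc1
    rw [hS2, Finset.mem_biUnion] at hc2
    obtain ⟨t, _, rfl⟩ := hc1
    obtain ⟨t', _, hc2⟩ := hc2
    rw [Finset.mem_image] at hc2
    obtain ⟨j, _, hj⟩ := hc2
    simp [Prod.ext_iff] at hj
  have hsum1 : 2 * (k - 1) ≤ ∑ c ∈ S1, cr (cutf c) w := by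
    rw [hS1, Finset.sum_image (by intro a _ b _ h; simpa [Prod.ext_iff] using h)]
    calc 2 * (k - 1) = ∑ _t ∈ Finset.range (k - 1), 2 := by
          simp [Finset.sum_const, Finset.card_range, Nat.mul_comm]
      _ ≤ _ := by
          apply Finset.sum_le_sum
          intro t ht
          rw [Finset.mem_range] at ht
          obtain ⟨x, hx, hfx⟩ := hwit1 t ht
          exact cr_active hw (hS1sub (Finset.mem_image.2 ⟨t, Finset.mem_range.2 ht, rfl⟩)) x hx hfx
  have hsum2 : 2 * (∑ t ∈ Finset.range k, d (t + 1)) ≤ ∑ c ∈ S2, cr (cutf c) w := by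
    rw [hS2, Finset.sum_biUnion ?hdisj]
    case hdisj =>
      intro a ha b hb hab
      apply Finset.disjoint_left.2
      intro c hc1 hc2
      rw [Finset.mem_image] at hc1 hc2
      obtain ⟨j1, _, h1⟩ := hc1
      obtain ⟨j2, _, h2⟩ := hc2
      apply hab
      have := h1.trans h2.symm
      simp [Prod.ext_iff] at this
      omega
    rw [Finset.mul_sum]
    apply Finset.sum_le_sum
    intro t ht
    rw [Finset.mem_range] at ht
    rw [Finset.sum_image (by intro a _ b _ h; simpa [Prod.ext_iff] using h)]
    calc 2 * d (t + 1) = ∑ _j ∈ Finset.range (d (t + 1)), 2 := by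
          simp [Finset.sum_const, Finset.card_range, Nat.mul_comm]
      _ ≤ _ := by
          apply Finset.sum_le_sum
          intro j hj
          rw [Finset.mem_range] at hj
          obtain ⟨x, hx, hfx⟩ := hwit2 t ht j hj
          refine cr_active hw (hS2sub ?_) x hx hfx
          rw [hS2, Finset.mem_biUnion]
          exact ⟨t, Finset.mem_range.2 ht, Finset.mem_image.2 ⟨j, Finset.mem_range.2 hj, rfl⟩⟩
  have hunion : ∑ c ∈ S1 ∪ S2, cr (cutf c) w = ∑ c ∈ S1, cr (cutf c) w + ∑ c ∈ S2, cr (cutf c) w :=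
    Finset.sum_union hdisj
  have hsub : S1 ∪ S2 ⊆ cutSet m n := Finset.union_subset hS1sub hS2sub
  have hne : w ≠ [] := by intro hcon; rw [hcon] at hw; simp [IsTourC] at hw
  have htotal : ∑ c ∈ cutSet m n, cr (cutf c) w = w.length - 1 := sum_cr_eq w hw.1 hne
  have : ∑ c ∈ S1 ∪ S2, cr (cutf c) w ≤ w.length - 1 := by
    rw [← htotal]
    exact Finset.sum_le_sum_of_subset hsub
  omega

/-- every closed walk from `v_{1,0}` in `A_C(m,n)` has even cost, and
for any such walk there is an excursion-form walk (rows visited in increasing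
order, each as a single back-and-forth excursion from `v_{i,0}` to some `v_{i,j_i}`)
of no greater cost and equal or greater reward (rewards counted once per vertex). -/
theorem stmt9 (m n : ℕ) (hm : 1 ≤ m) (r : ℕ × ℕ → NNReal) (hr0 : ∀ i, r (i, 0) = 0)
    (w : List (ℕ × ℕ)) (hw : IsTourC m n w) :
    Even (cost w) ∧
    ∃ (k : ℕ) (d : ℕ → ℕ), 1 ≤ k ∧ k ≤ m ∧ (∀ i, d i ≤ n) ∧
      IsTourC m n (excWalk k d) ∧ cost (excWalk k d) ≤ cost w ∧
      ∑ v ∈ w.toFinset, r v ≤ ∑ v ∈ (excWalk k d).toFinset, r v := by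
  classical
  obtain ⟨hch, hh, hl⟩ := hw
  have hne : w ≠ [] := by intro hcon; rw [hcon] at hh; simp at hh
  have hmem10 : (1, 0) ∈ w := by
    match w, hh with
    | a :: l, hh => have : a = (1,0) := by simpa using hh
                    subst this; exact List.mem_cons_self
  -- vertex bounds
  have hbounds : ∀ v ∈ w, 1 ≤ v.1 ∧ v.1 ≤ m ∧ v.2 ≤ n := by
    intro v hv
    rcases chain_bounds w hch v hv with h | h
    · exact h
    · have : w = [(1, 0)] := by
        match w, hh, h with
        | [a], hh, _ => have : a = (1,0) := by simpa using hh
                        rw [this]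
      rw [this] at hv
      simp at hv
      subst hv
      exact ⟨le_refl 1, hm, Nat.zero_le n⟩
  -- even cost
  have heven : Even (cost w) := by
    rw [cost, ← sum_cr_eq w hch hne]
    apply Finset.even_sum
    intro c _
    match w, hh, hl with
    | a :: l, hh, hl =>
        have ha : a = (1, 0) := by simpa using hh
        subst ha
        exact (cr_even (cutf c) l (1, 0) (1, 0) hl).2 rfl
  refine ⟨heven, ?_⟩
  -- choose k and d
  obtain ⟨k, d, hkdef, hddef⟩ :
      ∃ (k : ℕ) (d : ℕ → ℕ), k = w.toFinset.sup Prod.fst ∧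
        d = fun i => (w.toFinset.filter (fun v => v.1 = i)).sup Prod.snd := ⟨_, _, rfl, rfl⟩
  have hmemF : (1, 0) ∈ w.toFinset := List.mem_toFinset.2 hmem10
  have hk1 : 1 ≤ k := by rw [hkdef]; exact Finset.le_sup (f := Prod.fst) hmemF
  have hkm : k ≤ m := by
    rw [hkdef]
    exact Finset.sup_le fun v hv => (hbounds v (List.mem_toFinset.1 hv)).2.1
  have hdn : ∀ i, d i ≤ n := by
    intro i
    rw [hddef]
    apply Finset.sup_le
    intro v hv
    rw [Finset.mem_filter] at hv
    exact (hbounds v (List.mem_toFinset.1 hv.1)).2.2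
  have hvk : ∀ v ∈ w, v.1 ≤ k := by
    intro v hv
    rw [hkdef]
    exact Finset.le_sup (f := Prod.fst) (List.mem_toFinset.2 hv)
  have hvd : ∀ v ∈ w, v.2 ≤ d v.1 := by
    intro v hv
    rw [hddef]
    apply Finset.le_sup (f := Prod.snd)
    rw [Finset.mem_filter]
    exact ⟨List.mem_toFinset.2 hv, rfl⟩
  refine ⟨k, d, hk1, hkm, hdn, excWalk_tour d hk1 hkm hdn, ?_, ?_⟩
  · -- cost bound
    have hwit1 : ∀ t, t < k - 1 → ∃ x ∈ w, cutf (t + 2, 0) x = true := by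
      intro t ht
      obtain ⟨v, hv, hkv⟩ := Finset.exists_mem_eq_sup w.toFinset ⟨(1, 0), hmemF⟩ Prod.fst
      refine ⟨v, List.mem_toFinset.1 hv, ?_⟩
      have hkv' : k = v.1 := by rw [hkdef, hkv]
      simp only [cutf, if_true, eq_self_iff_true, decide_eq_true_eq]
      omega
    have hwit2 : ∀ t, t < k → ∀ j, j < d (t + 1) → ∃ x ∈ w, cutf (t + 1, j + 1) x = true := by
      intro t ht j hj
      have hfne : (w.toFinset.filter (fun v => v.1 = t + 1)).Nonempty := by
        rcases Finset.eq_empty_or_nonempty (w.toFinset.filter (fun v => v.1 = t + 1)) with h | h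
        · exfalso
          have : d (t + 1) = 0 := by rw [hddef]; simp only [h]; exact Finset.sup_empty
          omega
        · exact h
      obtain ⟨v, hv, hdv⟩ := Finset.exists_mem_eq_sup _ hfne Prod.snd
      rw [Finset.mem_filter] at hv
      refine ⟨v, List.mem_toFinset.1 hv.1, ?_⟩
      have hdv' : d (t + 1) = v.2 := by rw [hddef]; exact hdv
      have hj0 : ¬ (j + 1 = 0) := by omega
      simp only [cutf, hj0, if_false, decide_eq_true_eq]
      exact ⟨hv.2, by omega⟩
    have hlb := tour_cost_lb d w ⟨hch, hh, hl⟩ hk1 hkm hdn hwit1 hwit2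
    have hlen := excWalk_length d hk1
    rw [cost, cost, hlen]
    omega
  · -- rewards
    apply Finset.sum_le_sum_of_subset
    intro v hv
    rw [List.mem_toFinset] at hv ⊢
    obtain ⟨i, j⟩ := v
    exact mem_excWalk d (hbounds _ hv).1 (hvk _ hv) (hvd _ hv)
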